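/- Let (A, ⟨⟨-,-⟩⟩) be a double quasi-Poisson algebra over A₀. Then the flipped operation ⟨⟨a,b⟩⟩_op := ⟨⟨a,b⟩⟩^∘ is an A₀-linear double quasi-Poisson bracket on the opposite algebra A^op. Moreover, if Φ ∈ A^× is a (multiplicative) moment map for (A, ⟨⟨-,-⟩⟩), then Φ⁻¹ is a moment map for (A^op, ⟨⟨-,-⟩⟩_op). -/

import Mathlib

open TensorProduct

noncomputable section

namespace Stmt1

variable {A : Type*} [Ring A] [Algebra ℂ A]

/-- The flip `(c ⊗ d)^∘ = d ⊗ c` on `A ⊗[ℂ] A`. -/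
def flipT : A ⊗[ℂ] A →ₗ[ℂ] A ⊗[ℂ] A := (TensorProduct.comm ℂ A A).toLinearMap

/-- The outer bimodule structure `a ⬝ (d' ⊗ d'') ⬝ b = (a d') ⊗ (d'' b)`. -/
def outerAct (a b : A) : A ⊗[ℂ] A →ₗ[ℂ] A ⊗[ℂ] A :=
  TensorProduct.map (LinearMap.mulLeft ℂ a) (LinearMap.mulRight ℂ b)

/-- The inner bimodule structure `a ∗ (d' ⊗ d'') ∗ b = (d' b) ⊗ (a d'')`. -/
def innerAct (a b : A) : A ⊗[ℂ] A →ₗ[ℂ] A ⊗[ℂ] A :=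
  TensorProduct.map (LinearMap.mulRight ℂ b) (LinearMap.mulLeft ℂ a)

/-- Axioms of a double bracket on `A`. -/
structure IsDoubleBracket (br : A →ₗ[ℂ] A →ₗ[ℂ] A ⊗[ℂ] A) : Prop where
  cyclic : ∀ a b : A, br a b = - flipT (br b a)
  right_der : ∀ a b c : A, br a (b * c) = outerAct 1 c (br a b) + outerAct b 1 (br a c)
  left_der : ∀ a b c : A, br (b * c) a = innerAct 1 c (br b a) + innerAct b 1 (br c a)

/-- `τ₍₁₂₃₎ : (a₁ ⊗ a₂) ⊗ a₃ ↦ (a₃ ⊗ a₁) ⊗ a₂`. -/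
def cyc3 : (A ⊗[ℂ] A) ⊗[ℂ] A →ₗ[ℂ] (A ⊗[ℂ] A) ⊗[ℂ] A :=
  ((TensorProduct.comm ℂ (A ⊗[ℂ] A) A).trans (TensorProduct.assoc ℂ A A A).symm).toLinearMap

/-- The left extension of a double bracket. -/
def brL (br : A →ₗ[ℂ] A →ₗ[ℂ] A ⊗[ℂ] A) (a : A) :
    A ⊗[ℂ] A →ₗ[ℂ] (A ⊗[ℂ] A) ⊗[ℂ] A :=
  TensorProduct.map (br a) LinearMap.id

/-- The double Jacobiator of a double bracket. -/
def tripleBr (br : A →ₗ[ℂ] A →ₗ[ℂ] A ⊗[ℂ] A) (a b c : A) : (A ⊗[ℂ] A) ⊗[ℂ] A :=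
  brL br a (br b c) + cyc3 (brL br b (br c a)) + cyc3 (cyc3 (brL br c (br a b)))

variable {I : Type*} [Fintype I] [DecidableEq I]

/-- `(e s)` is a complete family of orthogonal idempotents. -/
def IsCompleteOrthIdem (e : I → A) : Prop :=
  (∀ s t : I, e s * e t = if s = t then e s else 0) ∧ (∑ s, e s = 1)

/-- `A₀`-linearity of a double bracket. -/
def IsA0Linear (br : A →ₗ[ℂ] A →ₗ[ℂ] A ⊗[ℂ] A) (e : I → A) : Prop :=
  ∀ (s : I) (a : A), br (e s) a = 0 ∧ br a (e s) = 0

/-- The right-hand side of the quasi-Poisson property of the double Jacobiator. -/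
def qpRhs (e : I → A) (a b c : A) : (A ⊗[ℂ] A) ⊗[ℂ] A :=
  (4 : ℂ)⁻¹ • ∑ s, (
    ((c * e s * a) ⊗ₜ[ℂ] (e s * b)) ⊗ₜ[ℂ] e s
    - ((c * e s * a) ⊗ₜ[ℂ] e s) ⊗ₜ[ℂ] (b * e s)
    - ((c * e s) ⊗ₜ[ℂ] (a * e s * b)) ⊗ₜ[ℂ] e s
    + ((c * e s) ⊗ₜ[ℂ] (a * e s)) ⊗ₜ[ℂ] (b * e s)
    - ((e s * a) ⊗ₜ[ℂ] (e s * b)) ⊗ₜ[ℂ] (e s * c)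
    + ((e s * a) ⊗ₜ[ℂ] e s) ⊗ₜ[ℂ] (b * e s * c)
    + (e s ⊗ₜ[ℂ] (a * e s * b)) ⊗ₜ[ℂ] (e s * c)
    - (e s ⊗ₜ[ℂ] (a * e s)) ⊗ₜ[ℂ] (b * e s * c))

/-- The double bracket is quasi-Poisson. -/
def IsQuasiPoisson (br : A →ₗ[ℂ] A →ₗ[ℂ] A ⊗[ℂ] A) (e : I → A) : Prop :=
  ∀ a b c : A, tripleBr br a b c = qpRhs e a b c

/-- `Φ` is a (multiplicative) moment map for the double quasi-Poisson bracket. -/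
def IsQuasiMomentMap (br : A →ₗ[ℂ] A →ₗ[ℂ] A ⊗[ℂ] A) (e : I → A) (Φ : A) : Prop :=
  IsUnit Φ ∧ (Φ = ∑ s, e s * Φ * e s) ∧
  ∀ (s : I) (a : A),
    br (e s * Φ * e s) a = (2 : ℂ)⁻¹ • (
      (a * e s) ⊗ₜ[ℂ] (e s * Φ * e s) - e s ⊗ₜ[ℂ] (e s * Φ * e s * a)
      + (a * (e s * Φ * e s)) ⊗ₜ[ℂ] e s - (e s * Φ * e s) ⊗ₜ[ℂ] (e s * a))

/-- The flipped double bracket `⟨⟨a,b⟩⟩_op := ⟨⟨a,b⟩⟩^∘` on the opposite algebra. -/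
def opBr (br : A →ₗ[ℂ] A →ₗ[ℂ] A ⊗[ℂ] A) :
    Aᵐᵒᵖ →ₗ[ℂ] Aᵐᵒᵖ →ₗ[ℂ] Aᵐᵒᵖ ⊗[ℂ] Aᵐᵒᵖ :=
  (br.compl₁₂ (MulOpposite.opLinearEquiv ℂ).symm.toLinearMap
      (MulOpposite.opLinearEquiv ℂ).symm.toLinearMap).compr₂
    ((TensorProduct.map (MulOpposite.opLinearEquiv ℂ).toLinearMap
        (MulOpposite.opLinearEquiv ℂ).toLinearMap).comp
      (TensorProduct.comm ℂ A A).toLinearMap)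


section Aux
open MulOpposite
variable {A : Type*} [Ring A] [Algebra ℂ A]

@[simp] lemma flipT_tmul (x y : A) : flipT (x ⊗ₜ[ℂ] y) = y ⊗ₜ[ℂ] x := rfl

@[simp] lemma innerAct_tmul (a b x y : A) :
    innerAct a b (x ⊗ₜ[ℂ] y) = (x * b) ⊗ₜ[ℂ] (a * y) := rfl

@[simp] lemma outerAct_tmul (a b x y : A) :
    outerAct a b (x ⊗ₜ[ℂ] y) = (a * x) ⊗ₜ[ℂ] (y * b) := rfl

@[simp] lemma cyc3_tmul (x y z : A) :
    cyc3 ((x ⊗ₜ[ℂ] y) ⊗ₜ[ℂ] z) = (z ⊗ₜ[ℂ] x) ⊗ₜ[ℂ] y := rfl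

@[simp] lemma brL_tmul (br : A →ₗ[ℂ] A →ₗ[ℂ] A ⊗[ℂ] A) (a x y : A) :
    brL br a (x ⊗ₜ[ℂ] y) = (br a x) ⊗ₜ[ℂ] y := rfl

/-- `P : A ⊗ A → Aᵒᵖ ⊗ Aᵒᵖ`, `x ⊗ y ↦ op y ⊗ op x`. -/
def Pmap : A ⊗[ℂ] A →ₗ[ℂ] Aᵐᵒᵖ ⊗[ℂ] Aᵐᵒᵖ :=
  (TensorProduct.map (opLinearEquiv ℂ).toLinearMap (opLinearEquiv ℂ).toLinearMap).comp
    (TensorProduct.comm ℂ A A).toLinearMap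

@[simp] lemma Pmap_tmul (x y : A) : Pmap (x ⊗ₜ[ℂ] y) = op y ⊗ₜ[ℂ] op x := rfl

lemma opBr_apply (br : A →ₗ[ℂ] A →ₗ[ℂ] A ⊗[ℂ] A) (a b : A) :
    opBr br (op a) (op b) = Pmap (br a b) := rfl

end Aux

section Aux2
open MulOpposite
variable {A : Type*} [Ring A] [Algebra ℂ A]

/-- `(x ⊗ y) ⊗ z ↦ (op x ⊗ op z) ⊗ op y`. -/
def Rmap : (A ⊗[ℂ] A) ⊗[ℂ] A →ₗ[ℂ] (Aᵐᵒᵖ ⊗[ℂ] Aᵐᵒᵖ) ⊗[ℂ] Aᵐᵒᵖ :=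
  (TensorProduct.map Pmap (opLinearEquiv ℂ).toLinearMap).comp cyc3

@[simp] lemma Rmap_tmul (x y z : A) :
    Rmap ((x ⊗ₜ[ℂ] y) ⊗ₜ[ℂ] z) = (op x ⊗ₜ[ℂ] op z) ⊗ₜ[ℂ] op y := rfl

lemma ext3 {B : Type*} [AddCommGroup B] [Module ℂ B]
    {f g : (A ⊗[ℂ] A) ⊗[ℂ] A →ₗ[ℂ] B}
    (h : ∀ x y z : A, f ((x ⊗ₜ[ℂ] y) ⊗ₜ[ℂ] z) = g ((x ⊗ₜ[ℂ] y) ⊗ₜ[ℂ] z)) : f = g := by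
  apply TensorProduct.ext'
  intro xy z
  induction xy using TensorProduct.induction_on with
  | zero => simp
  | tmul x y => exact h x y z
  | add u v hu hv => simp_all [add_tmul]

lemma ext2 {B : Type*} [AddCommGroup B] [Module ℂ B]
    {f g : A ⊗[ℂ] A →ₗ[ℂ] B}
    (h : ∀ x y : A, f (x ⊗ₜ[ℂ] y) = g (x ⊗ₜ[ℂ] y)) : f = g :=
  TensorProduct.ext' h

lemma K1 : Rmap (A := A) ∘ₗ (cyc3 ∘ₗ cyc3) = TensorProduct.map Pmap (opLinearEquiv ℂ).toLinearMap := by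
  refine ext3 (B := (Aᵐᵒᵖ ⊗[ℂ] Aᵐᵒᵖ) ⊗[ℂ] Aᵐᵒᵖ) fun x y z => ?_; rfl

lemma K2 : Rmap (A := A) ∘ₗ cyc3 = cyc3 ∘ₗ TensorProduct.map Pmap (opLinearEquiv ℂ).toLinearMap := by
  refine ext3 (B := (Aᵐᵒᵖ ⊗[ℂ] Aᵐᵒᵖ) ⊗[ℂ] Aᵐᵒᵖ) fun x y z => ?_; rfl

lemma K3 : Rmap (A := A) = cyc3 ∘ₗ cyc3 ∘ₗ TensorProduct.map Pmap (opLinearEquiv ℂ).toLinearMap := by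
  refine ext3 (B := (Aᵐᵒᵖ ⊗[ℂ] Aᵐᵒᵖ) ⊗[ℂ] Aᵐᵒᵖ) fun x y z => ?_; rfl

lemma K4 (br : A →ₗ[ℂ] A →ₗ[ℂ] A ⊗[ℂ] A) (a : A) :
    brL (opBr br) (op a) ∘ₗ Pmap =
      (TensorProduct.map Pmap (opLinearEquiv ℂ).toLinearMap) ∘ₗ (brL br a ∘ₗ flipT) := by
  refine ext2 fun x y => ?_
  show brL (opBr br) (op a) (op y ⊗ₜ[ℂ] op x) = _
  simp only [LinearMap.comp_apply, flipT_tmul, brL_tmul]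
  rfl

end Aux2

section Aux3
open MulOpposite
variable {A : Type*} [Ring A] [Algebra ℂ A]

lemma Pmap_flipT (ω : A ⊗[ℂ] A) : Pmap (flipT ω) = flipT (Pmap ω) := by
  have : Pmap (A := A) ∘ₗ flipT = flipT ∘ₗ Pmap := ext2 fun x y => rfl
  exact LinearMap.congr_fun this ω

lemma flipT_flipT (ω : A ⊗[ℂ] A) : flipT (flipT ω) = ω := by
  have : flipT (A := A) ∘ₗ flipT = LinearMap.id := ext2 fun x y => rfl
  exact LinearMap.congr_fun this ω

lemma Pmap_outer_right (c : A) (ω : A ⊗[ℂ] A) :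
    Pmap (outerAct c 1 ω) = outerAct 1 (op c) (Pmap ω) := by
  have : Pmap (A := A) ∘ₗ outerAct c 1 = outerAct 1 (op c) ∘ₗ Pmap :=
    ext2 fun x y => by simp [← op_mul]
  exact LinearMap.congr_fun this ω

lemma Pmap_outer_left (b : A) (ω : A ⊗[ℂ] A) :
    Pmap (outerAct 1 b ω) = outerAct (op b) 1 (Pmap ω) := by
  have : Pmap (A := A) ∘ₗ outerAct 1 b = outerAct (op b) 1 ∘ₗ Pmap :=
    ext2 fun x y => by simp [← op_mul]
  exact LinearMap.congr_fun this ω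

lemma Pmap_inner_right (c : A) (ω : A ⊗[ℂ] A) :
    Pmap (innerAct 1 c ω) = innerAct (op c) 1 (Pmap ω) := by
  have : Pmap (A := A) ∘ₗ innerAct 1 c = innerAct (op c) 1 ∘ₗ Pmap :=
    ext2 fun x y => by simp [← op_mul]
  exact LinearMap.congr_fun this ω

lemma Pmap_inner_left (b : A) (ω : A ⊗[ℂ] A) :
    Pmap (innerAct b 1 ω) = innerAct 1 (op b) (Pmap ω) := by
  have : Pmap (A := A) ∘ₗ innerAct b 1 = innerAct 1 (op b) ∘ₗ Pmap :=
    ext2 fun x y => by simp [← op_mul]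
  exact LinearMap.congr_fun this ω

lemma innerAct_innerAct (a b c d : A) (ω : A ⊗[ℂ] A) :
    innerAct a b (innerAct c d ω) = innerAct (a * c) (d * b) ω := by
  have : innerAct a b ∘ₗ innerAct c d = innerAct (a * c) (d * b) :=
    ext2 fun x y => by simp [mul_assoc]
  exact LinearMap.congr_fun this ω

lemma innerAct_one_one (ω : A ⊗[ℂ] A) : innerAct 1 1 ω = ω := by
  have : innerAct (A := A) 1 1 = LinearMap.id := ext2 fun x y => by simp
  exact LinearMap.congr_fun this ω

lemma tripleBr_op (br : A →ₗ[ℂ] A →ₗ[ℂ] A ⊗[ℂ] A) (hbr : IsDoubleBracket br) (a b c : A) :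
    tripleBr (opBr br) (op a) (op b) (op c) = - Rmap (tripleBr br c b a) := by
  have hflip : ∀ x y : A, flipT (br x y) = - br y x := by
    intro x y
    rw [hbr.cyclic x y, map_neg, flipT_flipT]
  have h4 : ∀ (u : A) (ω : A ⊗[ℂ] A), brL (opBr br) (op u) (Pmap ω)
      = TensorProduct.map Pmap (opLinearEquiv ℂ).toLinearMap (brL br u (flipT ω)) :=
    fun u ω => LinearMap.congr_fun (K4 br u) ω
  have e1 := (LinearMap.congr_fun (K1 (A := A)) (brL br a (br c b))).symm
  have e2 := (LinearMap.congr_fun (K2 (A := A)) (brL br b (br a c))).symm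
  have e3 := (LinearMap.congr_fun (K3 (A := A)) (brL br c (br b a)))
  simp only [LinearMap.comp_apply] at e1 e2 e3
  calc tripleBr (opBr br) (op a) (op b) (op c)
      = brL (opBr br) (op a) (Pmap (br b c))
        + cyc3 (brL (opBr br) (op b) (Pmap (br c a)))
        + cyc3 (cyc3 (brL (opBr br) (op c) (Pmap (br a b)))) := rfl
    _ = TensorProduct.map Pmap (opLinearEquiv ℂ).toLinearMap (brL br a (- br c b))
        + cyc3 (TensorProduct.map Pmap (opLinearEquiv ℂ).toLinearMap (brL br b (- br a c)))
        + cyc3 (cyc3 (TensorProduct.map Pmap (opLinearEquiv ℂ).toLinearMap (brL br c (- br b a)))) := by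
        rw [h4, h4, h4, hflip, hflip, hflip]
    _ = - (Rmap (cyc3 (cyc3 (brL br a (br c b))))
        + Rmap (cyc3 (brL br b (br a c)))
        + Rmap (brL br c (br b a))) := by
        rw [← e1, ← e2, e3]
        simp only [map_neg]
        abel
    _ = - Rmap (tripleBr br c b a) := by
        simp only [tripleBr, map_add]
        abel

end Aux3

section Aux4
open MulOpposite
variable {A : Type*} [Ring A] [Algebra ℂ A] {I : Type*} [Fintype I] [DecidableEq I]

lemma qpRhs_op (e : I → A) (a b c : A) :
    - Rmap (qpRhs e c b a) = qpRhs (fun s => op (e s)) (op a) (op b) (op c) := by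
  have key : qpRhs (fun s => op (e s)) (op a) (op b) (op c) + Rmap (qpRhs e c b a) = 0 := by
    simp only [qpRhs, map_smul, map_sum, ← smul_add, ← Finset.sum_add_distrib]
    refine smul_eq_zero_of_right _ (Finset.sum_eq_zero fun s _ => ?_)
    simp only [map_add, map_sub, Rmap_tmul, ← op_mul, mul_assoc]
    abel
  exact neg_eq_of_add_eq_zero_left key

end Aux4

set_option maxHeartbeats 1000000 in
/-- If `(A, ⟨⟨-,-⟩⟩)` is a double quasi-Poisson algebra over `A₀`,
then the flipped operation `⟨⟨-,-⟩⟩_op` is an `A₀`-linear double quasi-Poisson bracket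
on `A^op`; moreover if `Φ ∈ A^×` is a moment map for `(A, ⟨⟨-,-⟩⟩)` then `Φ⁻¹` is a
moment map for `(A^op, ⟨⟨-,-⟩⟩_op)`. -/
theorem double_quasiPoisson_opposite
    (e : I → A) (he : IsCompleteOrthIdem e)
    (br : A →ₗ[ℂ] A →ₗ[ℂ] A ⊗[ℂ] A)
    (hbr : IsDoubleBracket br) (hlin : IsA0Linear br e) (hqP : IsQuasiPoisson br e)
    (Φ : A) (hΦ : IsQuasiMomentMap br e Φ) :
    IsDoubleBracket (opBr br) ∧
    IsA0Linear (opBr br) (fun s => MulOpposite.op (e s)) ∧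
    IsQuasiPoisson (opBr br) (fun s => MulOpposite.op (e s)) ∧
    IsQuasiMomentMap (opBr br) (fun s => MulOpposite.op (e s))
      (MulOpposite.op (Ring.inverse Φ)) := by
  obtain ⟨horth, hsum1⟩ := he
  obtain ⟨hu, hsum, hmom⟩ := hΦ
  set Ψ : A := Ring.inverse Φ with hΨdef
  have hΦΨ : Φ * Ψ = 1 := Ring.mul_inverse_cancel Φ hu
  have hΨΦ : Ψ * Φ = 1 := Ring.inverse_mul_cancel Φ hu
  -- commutation of Φ with the idempotents
  have hcomm : ∀ s, Φ * e s = e s * Φ := by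
    intro s
    have h1 : Φ * e s = e s * Φ * e s := by
      conv_lhs => rw [hsum]
      rw [Finset.sum_mul]
      rw [Finset.sum_eq_single s (fun t _ ht => by rw [mul_assoc, horth, if_neg ht, mul_zero])
        (fun hs => absurd (Finset.mem_univ s) hs)]
      rw [mul_assoc, horth s s, if_pos rfl]
    have h2 : e s * Φ = e s * Φ * e s := by
      conv_lhs => rw [hsum]
      rw [Finset.mul_sum]
      rw [Finset.sum_eq_single s
        (fun t _ ht => by rw [← mul_assoc, ← mul_assoc, horth, if_neg (Ne.symm ht), zero_mul, zero_mul])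
        (fun hs => absurd (Finset.mem_univ s) hs)]
      rw [← mul_assoc, ← mul_assoc, horth s s, if_pos rfl]
    exact h1.trans h2.symm
  have hcommΨ : ∀ s, Ψ * e s = e s * Ψ := by
    intro s
    calc Ψ * e s = Ψ * e s * (Φ * Ψ) := by rw [hΦΨ, mul_one]
      _ = Ψ * (e s * Φ) * Ψ := by simp only [mul_assoc]
      _ = Ψ * (Φ * e s) * Ψ := by rw [← hcomm s]
      _ = Ψ * Φ * (e s * Ψ) := by simp only [mul_assoc]
      _ = e s * Ψ := by rw [hΨΦ, one_mul]
  have hΨsum : Ψ = ∑ t, e t * Ψ * e t := by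
    symm
    calc (∑ t, e t * Ψ * e t) = ∑ t, Ψ * e t := Finset.sum_congr rfl fun t _ => by
          rw [← hcommΨ t, mul_assoc, horth t t, if_pos rfl]
      _ = Ψ * ∑ t, e t := (Finset.mul_sum _ _ _).symm
      _ = Ψ := by rw [hsum1, mul_one]
  -- basic bracket facts
  have br_one : ∀ a : A, br 1 a = 0 := by
    intro a
    have h := hbr.left_der a 1 1
    rw [one_mul] at h
    simp only [innerAct_one_one] at h
    exact left_eq_add.mp h
  have brPhi : ∀ a : A, br Φ a = ∑ t, br (e t * Φ * e t) a := by
    intro a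
    conv_lhs => rw [hsum]
    simp only [map_sum, LinearMap.coe_sum, Finset.sum_apply]
  have brPsiA : ∀ a : A, br Ψ a = - innerAct Ψ Ψ (br Φ a) := by
    intro a
    have h0 : innerAct 1 Ψ (br Φ a) + innerAct Φ 1 (br Ψ a) = 0 := by
      rw [← hbr.left_der a Φ Ψ, hΦΨ, br_one]
    have h1 : innerAct Ψ 1 (innerAct 1 Ψ (br Φ a) + innerAct Φ 1 (br Ψ a)) = 0 := by
      rw [h0, map_zero]
    rw [map_add, innerAct_innerAct, innerAct_innerAct, hΨΦ] at h1
    simp only [mul_one, one_mul] at h1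
    simp only [innerAct_one_one] at h1
    exact eq_neg_of_add_eq_zero_right h1
  -- normalization rules
  have hee' : ∀ (t u : I) (x : A), e t * (e u * x) = if t = u then e t * x else 0 := by
    intro t u x
    rw [← mul_assoc, horth]
    split <;> simp
  have hΨe' : ∀ (t : I) (x : A), Ψ * (e t * x) = e t * (Ψ * x) := by
    intro t x
    rw [← mul_assoc, hcommΨ, mul_assoc]
  have hΦe' : ∀ (t : I) (x : A), Φ * (e t * x) = e t * (Φ * x) := by
    intro t x
    rw [← mul_assoc, hcomm, mul_assoc]
  have hΨΦ' : ∀ x : A, Ψ * (Φ * x) = x := by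
    intro x; rw [← mul_assoc, hΨΦ, one_mul]
  have hΦΨ' : ∀ x : A, Φ * (Ψ * x) = x := by
    intro x; rw [← mul_assoc, hΦΨ, one_mul]
  -- the key formula for the bracket with e s * Ψ * e s
  have brpsi : ∀ (s : I) (a : A), br (e s * Ψ * e s) a
      = (2:ℂ)⁻¹ • ( (e s * Ψ * e s) ⊗ₜ[ℂ] (e s * a) + e s ⊗ₜ[ℂ] (e s * Ψ * e s * a)
          - (a * (e s * Ψ * e s)) ⊗ₜ[ℂ] e s - (a * e s) ⊗ₜ[ℂ] (e s * Ψ * e s) ) := by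
    intro s a
    have step1 : br (e s * Ψ * e s) a = innerAct (e s) (e s) (br Ψ a) := by
      rw [hbr.left_der a (e s * Ψ) (e s), (hlin s a).1, map_zero, add_zero,
        hbr.left_der a (e s) Ψ, (hlin s a).1, map_zero, zero_add, innerAct_innerAct]
      simp only [one_mul, mul_one]
    rw [step1, brPsiA, map_neg, innerAct_innerAct, brPhi, map_sum]
    have ht : ∀ t : I, innerAct (e s * Ψ) (Ψ * e s) (br (e t * Φ * e t) a)
        = if t = s then (2:ℂ)⁻¹ • ( (a * (e s * Ψ * e s)) ⊗ₜ[ℂ] e s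
            - (e s * Ψ * e s) ⊗ₜ[ℂ] (e s * a) + (a * e s) ⊗ₜ[ℂ] (e s * Ψ * e s)
            - e s ⊗ₜ[ℂ] (e s * Ψ * e s * a) ) else 0 := by
      intro t
      rw [hmom t a, map_smul, map_sub, map_add, map_sub, innerAct_tmul, innerAct_tmul,
        innerAct_tmul, innerAct_tmul]
      by_cases h : t = s
      · subst h
        rw [if_pos rfl]
        simp [mul_assoc, hΨe', hcommΨ, hΦe', hcomm, hΨΦ, hΨΦ', hΦΨ, hΦΨ', hee', horth]
      · rw [if_neg h]
        simp [mul_assoc, hΨe', hcommΨ, hΦe', hcomm, hΨΦ, hΨΦ', hΦΨ, hΦΨ', hee', horth,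
          h, Ne.symm h]
    rw [Finset.sum_congr rfl fun t _ => ht t, Finset.sum_ite_eq' Finset.univ s]
    simp only [Finset.mem_univ, if_true]
    module
  refine ⟨⟨?_, ?_, ?_⟩, ?_, ?_, ?_, ?_, ?_⟩
  · -- cyclic
    intro α β
    rw [← MulOpposite.op_unop α, ← MulOpposite.op_unop β]
    simp only [opBr_apply]
    rw [hbr.cyclic (MulOpposite.unop α) (MulOpposite.unop β), map_neg, Pmap_flipT]
  · -- right derivation
    intro α β γ
    rw [← MulOpposite.op_unop α, ← MulOpposite.op_unop β, ← MulOpposite.op_unop γ,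
      ← MulOpposite.op_mul]
    simp only [opBr_apply]
    rw [hbr.right_der (MulOpposite.unop α) (MulOpposite.unop γ) (MulOpposite.unop β),
      map_add, Pmap_outer_left, Pmap_outer_right]
    exact add_comm _ _
  · -- left derivation
    intro α β γ
    rw [← MulOpposite.op_unop α, ← MulOpposite.op_unop β, ← MulOpposite.op_unop γ,
      ← MulOpposite.op_mul]
    simp only [opBr_apply]
    rw [hbr.left_der (MulOpposite.unop α) (MulOpposite.unop γ) (MulOpposite.unop β),
      map_add, Pmap_inner_left, Pmap_inner_right]
    exact add_comm _ _
  · -- A₀-linearity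
    intro s α
    constructor
    · rw [← MulOpposite.op_unop α, opBr_apply, (hlin s (MulOpposite.unop α)).1, map_zero]
    · rw [← MulOpposite.op_unop α, opBr_apply, (hlin s (MulOpposite.unop α)).2, map_zero]
  · -- quasi-Poisson
    intro α β γ
    rw [← MulOpposite.op_unop α, ← MulOpposite.op_unop β, ← MulOpposite.op_unop γ,
      tripleBr_op br hbr, hqP, qpRhs_op]
  · -- moment map: invertibility
    exact (isUnit_ringInverse.mpr hu).op
  · -- moment map: sum decomposition
    calc MulOpposite.op Ψ = MulOpposite.op (∑ t, e t * Ψ * e t) := congrArg _ hΨsum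
      _ = ∑ t, MulOpposite.op (e t * Ψ * e t) := Finset.op_sum _ _
      _ = ∑ t, MulOpposite.op (e t) * MulOpposite.op Ψ * MulOpposite.op (e t) :=
          Finset.sum_congr rfl fun t _ => by simp [mul_assoc]
  · -- moment map: bracket condition
    intro s α
    rw [← MulOpposite.op_unop α]
    have lhsrw : MulOpposite.op (e s) * MulOpposite.op Ψ * MulOpposite.op (e s)
        = MulOpposite.op (e s * Ψ * e s) := by simp [mul_assoc]
    rw [lhsrw, opBr_apply, brpsi s (MulOpposite.unop α), map_smul, map_sub, map_sub, map_add,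
      Pmap_tmul, Pmap_tmul, Pmap_tmul, Pmap_tmul]
    congr 1
    simp only [← MulOpposite.op_mul, mul_assoc]
    abel


end Stmt1
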